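/- Let m be a natural number with m ≡ 2 (mod 4) and let N be a natural number. Then the number of pairs (γ, δ) of functions Fin N → ℤ/mℤ such that every γ i lies in {0, (m/2 : ℤ/mℤ)} and the sum Σ_{i} (1 − γ i)*(1 − δ i) is odd (its image under the natural ring homomorphism ℤ/mℤ → ℤ/2ℤ is 1) equals (2^N − 1) * m^N / 2. -/

import Mathlib

open Finset

set_option linter.unusedSectionVars false

section CountAux

variable {α : Type*} [Fintype α] [DecidableEq α]

/-- Number of vectors in `α^N` whose total weight (in `ZMod 2`) is `c`. -/
private noncomputable def cnt (t : α → ZMod 2) (c : ZMod 2) (N : ℕ) : ℕ :=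
  Nat.card {v : Fin N → α // ∑ i, t (v i) = c}

private lemma cnt_zero_one (t : α → ZMod 2) : cnt t 1 0 = 0 := by
  haveI : IsEmpty {v : Fin 0 → α // ∑ i, t (v i) = 1} := by
    refine ⟨fun x => ?_⟩
    have h := x.2
    simp only [Finset.univ_eq_empty, Finset.sum_empty] at h
    exact (by decide : (0 : ZMod 2) ≠ 1) h
  exact Nat.card_of_isEmpty

private lemma cnt_zero_zero (t : α → ZMod 2) : cnt t 0 0 = 1 := by
  haveI : Unique {v : Fin 0 → α // ∑ i, t (v i) = 0} :=
    { default := ⟨fun i => i.elim0, by simp⟩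
      uniq := fun v => Subtype.ext (funext fun i => i.elim0) }
  exact Nat.card_unique

private lemma cnt_succ (t : α → ZMod 2) (c : ZMod 2) (N : ℕ) :
    cnt t c (N + 1) =
      (univ.filter fun a => t a = 0).card * cnt t c N +
      (univ.filter fun a => t a = 1).card * cnt t (c + 1) N := by
  classical
  have e : {v : Fin (N + 1) → α // ∑ i, t (v i) = c} ≃
      (a : α) × {w : Fin N → α // t a + ∑ i, t (w i) = c} :=
    { toFun := fun v => ⟨v.1 0, ⟨Fin.tail v.1, by
        have h := v.2
        rw [Fin.sum_univ_succ] at h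
        exact h⟩⟩
      invFun := fun x => ⟨Fin.cons x.1 x.2.1, by
        rw [Fin.sum_univ_succ]
        simpa [Fin.cons_zero, Fin.cons_succ] using x.2.2⟩
      left_inv := fun v => Subtype.ext (Fin.cons_self_tail v.1)
      right_inv := fun x => by
        refine Sigma.ext (by simp) ?_
        simp [Fin.tail_cons]
        exact HEq.rfl }
  have key : ∀ a : α, Nat.card {w : Fin N → α // t a + ∑ i, t (w i) = c} =
      if t a = 0 then cnt t c N else cnt t (c + 1) N := by
    intro a
    have h01 : t a = 0 ∨ t a = 1 := by
      generalize t a = x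
      revert x; decide
    rcases h01 with h | h
    · rw [if_pos h]
      exact Nat.card_congr (Equiv.subtypeEquivRight fun w => by rw [h, zero_add])
    · rw [if_neg (by rw [h]; decide)]
      refine Nat.card_congr (Equiv.subtypeEquivRight fun w => ?_)
      rw [h]
      have : ∀ c x : ZMod 2, 1 + x = c ↔ x = c + 1 := by decide
      exact this c _
  calc cnt t c (N + 1)
      = Nat.card ((a : α) × {w : Fin N → α // t a + ∑ i, t (w i) = c}) :=
        Nat.card_congr e
    _ = ∑ a : α, Nat.card {w : Fin N → α // t a + ∑ i, t (w i) = c} := by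
        rw [Nat.card_eq_fintype_card, Fintype.card_sigma]
        exact Finset.sum_congr rfl fun a _ => (Nat.card_eq_fintype_card).symm
    _ = ∑ a : α, if t a = 0 then cnt t c N else cnt t (c + 1) N :=
        Finset.sum_congr rfl fun a _ => key a
    _ = _ := by
        have hneg : (univ.filter fun x : α => ¬t x = 0) =
            univ.filter fun a : α => t a = 1 := by
          ext a
          have : ∀ x : ZMod 2, ¬x = 0 ↔ x = 1 := by decide
          simp [this]
        rw [Finset.sum_ite, Finset.sum_const, Finset.sum_const, smul_eq_mul,
          smul_eq_mul, hneg]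

private lemma cnt_formula (t : α → ZMod 2) (k : ℕ)
    (hE : (univ.filter fun a => t a = 0).card = 3 * k)
    (hO : (univ.filter fun a => t a = 1).card = k) (N : ℕ) :
    (cnt t 1 N : ℤ) * 2 = (4 * k) ^ N - (2 * k) ^ N ∧
    (cnt t 0 N : ℤ) * 2 = (4 * k) ^ N + (2 * k) ^ N := by
  induction N with
  | zero => simp [cnt_zero_one, cnt_zero_zero]
  | succ n ih =>
    obtain ⟨ih1, ih0⟩ := ih
    have h11 : (1 : ZMod 2) + 1 = 0 := by decide
    have h01 : (0 : ZMod 2) + 1 = 1 := by decide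
    constructor
    · rw [cnt_succ, hE, hO, h11]
      push_cast
      linear_combination (3 * (k : ℤ)) * ih1 + (k : ℤ) * ih0
    · rw [cnt_succ, hE, hO, h01]
      push_cast
      linear_combination (3 * (k : ℤ)) * ih0 + (k : ℤ) * ih1

end CountAux

/-- Counting step in part 6 of Theorem 4.13: for `m ≡ 2 (mod 4)`, the number of
pairs `(γ, δ)` with all `γ i ∈ {0, m/2}` and `Σ (1 - γ i)(1 - δ i)` odd equals
`(2^N - 1)·m^N/2`. -/
theorem stmt_15 (m : ℕ) (h2 : 2 ∣ m) (h4 : m % 4 = 2) (N : ℕ) :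
    Nat.card {p : (Fin N → ZMod m) × (Fin N → ZMod m) //
        (∀ i, p.1 i = 0 ∨ p.1 i = ((m / 2 : ℕ) : ZMod m)) ∧
        ZMod.castHom h2 (ZMod 2) (∑ i, (1 - p.1 i) * (1 - p.2 i)) = 1} =
      (2 ^ N - 1) * m ^ N / 2 := by
  classical
  obtain ⟨j, hj⟩ : ∃ j, m = 4 * j + 2 := ⟨m / 4, by omega⟩
  haveI : NeZero m := ⟨by omega⟩
  obtain ⟨k, hk⟩ : ∃ k, k = 2 * j + 1 := ⟨_, rfl⟩
  have hmd : m / 2 = k := by omega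
  set f : ZMod m →+* ZMod 2 := ZMod.castHom h2 (ZMod 2) with hf
  set c : ZMod m := ((m / 2 : ℕ) : ZMod m) with hc
  have hfc : f c = 1 := by
    rw [hc, map_natCast, hmd]
    have h1 : k % 2 = 1 := by omega
    calc ((k : ℕ) : ZMod 2) = ((k % 2 : ℕ) : ZMod 2) := by
          rw [ZMod.natCast_mod]
      _ = 1 := by rw [h1]; norm_num
  have hc0 : c ≠ 0 := by
    intro h
    rw [hc, ZMod.natCast_eq_zero_iff] at h
    have := Nat.le_of_dvd (by omega) h
    omega
  -- fiber of f over 0 has k elements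
  have fib0 : Nat.card {b : ZMod m // f b = 0} = k := by
    have e1 : {b : ZMod m // f b = 1} ≃ {b : ZMod m // f b = 0} :=
      { toFun := fun b => ⟨b.1 - c, by rw [map_sub, b.2, hfc, sub_self]⟩
        invFun := fun b => ⟨b.1 + c, by rw [map_add, b.2, hfc, zero_add]⟩
        left_inv := fun b => Subtype.ext (by simp)
        right_inv := fun b => Subtype.ext (by simp) }
    have e2 : (Σ y : ZMod 2, {b : ZMod m // f b = y}) ≃ ZMod m :=
      Equiv.sigmaFiberEquiv f
    have htot : ∑ y : ZMod 2, Fintype.card {b : ZMod m // f b = y} = m := by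
      rw [← Fintype.card_sigma, Fintype.card_congr e2, ZMod.card]
    have huniv : (univ : Finset (ZMod 2)) = {0, 1} := by decide
    rw [huniv, Finset.sum_insert (by decide), Finset.sum_singleton] at htot
    have h10 : Fintype.card {b : ZMod m // f b = 1} =
        Fintype.card {b : ZMod m // f b = 0} := Fintype.card_congr e1
    rw [Nat.card_eq_fintype_card]
    omega
  -- the alphabet
  set A := {ab : ZMod m × ZMod m // ab.1 = 0 ∨ ab.1 = c} with hA
  set t : A → ZMod 2 := fun x => f ((1 - x.1.1) * (1 - x.1.2)) with ht
  -- key characterization of t = 1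
  have key : ∀ x : A, t x = 1 ↔ x.1.1 = 0 ∧ f x.1.2 = 0 := by
    intro x
    have hx : t x = (1 - f x.1.1) * (1 - f x.1.2) := by
      rw [ht]
      simp [map_mul, map_sub, map_one]
    rcases x.2 with h | h
    · rw [hx, h, map_zero, sub_zero, one_mul]
      have : ∀ y : ZMod 2, 1 - y = 1 ↔ y = 0 := by decide
      simp [h, this]
    · rw [hx, h, hfc, sub_self, zero_mul]
      constructor
      · intro h'; exact absurd h' (by decide)
      · rintro ⟨h0, -⟩; exact absurd h0 hc0
  -- count of t = 1
  have hO : (univ.filter fun a : A => t a = 1).card = k := by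
    have e : {a : A // t a = 1} ≃ {b : ZMod m // f b = 0} :=
      { toFun := fun x => ⟨x.1.1.2, ((key x.1).1 x.2).2⟩
        invFun := fun b => ⟨⟨(0, b.1), Or.inl rfl⟩, (key _).2 ⟨rfl, b.2⟩⟩
        left_inv := fun x => Subtype.ext (Subtype.ext
          (Prod.ext (((key x.1).1 x.2).1.symm) rfl))
        right_inv := fun b => rfl }
    have := (Nat.card_congr e).trans fib0
    rwa [Nat.card_eq_fintype_card, Fintype.card_subtype] at this
  -- card of A
  have hcardA : Fintype.card A = 4 * k := by
    have e : A ≃ {a : ZMod m // a = 0 ∨ a = c} × ZMod m :=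
      { toFun := fun x => (⟨x.1.1, x.2⟩, x.1.2)
        invFun := fun y => ⟨(y.1.1, y.2), y.1.2⟩
        left_inv := fun x => rfl
        right_inv := fun y => rfl }
    rw [Fintype.card_congr e, Fintype.card_prod, ZMod.card]
    have hfil : (univ.filter fun a : ZMod m => a = 0 ∨ a = c) = {0, c} := by
      ext a; simp
    rw [Fintype.card_subtype, hfil, Finset.card_pair (Ne.symm hc0)]
    omega
  -- count of t = 0
  have hE : (univ.filter fun a : A => t a = 0).card = 3 * k := by
    have hsplit := Finset.card_filter_add_card_filter_not
      (s := (univ : Finset A)) (p := fun a => t a = 0)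
    rw [Finset.card_univ, hcardA] at hsplit
    have hneg : (univ.filter fun a : A => ¬t a = 0) =
        (univ.filter fun a : A => t a = 1) := by
      ext a
      have : ∀ x : ZMod 2, ¬x = 0 ↔ x = 1 := by decide
      simp [this]
    rw [hneg, hO] at hsplit
    omega
  -- main equivalence
  have E0 : {p : (Fin N → ZMod m) × (Fin N → ZMod m) //
        (∀ i, p.1 i = 0 ∨ p.1 i = c) ∧
        f (∑ i, (1 - p.1 i) * (1 - p.2 i)) = 1}
      ≃ {v : Fin N → A // ∑ i, t (v i) = 1} :=
    { toFun := fun p => ⟨fun i => ⟨(p.1.1 i, p.1.2 i), p.2.1 i⟩, by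
        have h := p.2.2
        rw [map_sum] at h
        exact h⟩
      invFun := fun v => ⟨(fun i => (v.1 i).1.1, fun i => (v.1 i).1.2),
        ⟨fun i => (v.1 i).2, by rw [map_sum]; exact v.2⟩⟩
      left_inv := fun p => rfl
      right_inv := fun v => rfl }
  have hcnt : Nat.card {p : (Fin N → ZMod m) × (Fin N → ZMod m) //
        (∀ i, p.1 i = 0 ∨ p.1 i = c) ∧
        f (∑ i, (1 - p.1 i) * (1 - p.2 i)) = 1} = cnt t 1 N :=
    Nat.card_congr E0
  rw [hcnt]
  -- apply the formula
  have hform := (cnt_formula t k hE hO N).1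
  have hnat : 2 * cnt t 1 N + (2 * k) ^ N = (4 * k) ^ N := by
    have h4k : ((2 * k : ℕ) : ℤ) ^ N ≤ ((4 * k : ℕ) : ℤ) ^ N := by
      apply pow_le_pow_left₀ (by positivity)
      push_cast; omega
    have : ((2 * cnt t 1 N + (2 * k) ^ N : ℕ) : ℤ) = (((4 * k) ^ N : ℕ) : ℤ) := by
      push_cast
      linarith [hform]
    exact_mod_cast this
  have hm2k : m = 2 * k := by omega
  rw [hm2k]
  have h4eq : (4 * k) ^ N = 2 ^ N * (2 * k) ^ N := by
    rw [← mul_pow]; ring_nf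
  rw [h4eq] at hnat
  have hsub : (2 ^ N - 1) * (2 * k) ^ N = 2 ^ N * (2 * k) ^ N - (2 * k) ^ N := by
    rw [Nat.sub_mul, one_mul]
  rw [hsub]
  omega
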